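/- For 0 ≤ p ≤ 1, all integers m ≥ 0 and all integers l with 0 ≤ l ≤ m, the inequality S_p(m+l) + S_p(m-l) - 2 S_p(m) ≤ l^{p+1} holds. -/

import Mathlib

open Finset

/-- Weighted binary digit sum: `s_p(n) = ∑_j 2^{pj} ε_j(n)`. -/
noncomputable def sWeight (p : ℝ) (n : ℕ) : ℝ :=
  ∑ j ∈ Finset.range n, if n.testBit j then (2:ℝ) ^ (p * (j:ℝ)) else 0

/-- `S_p(n) = ∑_{m=0}^{n-1} s_p(m)`. -/
noncomputable def SWeight (p : ℝ) (n : ℕ) : ℝ :=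
  ∑ m ∈ Finset.range n, sWeight p m

namespace SWaux

/-- Sum of residues mod `M` below `n`. -/
def Rz (M n : ℕ) : ℤ := ∑ k ∈ Finset.range n, ((k % M : ℕ) : ℤ)

lemma Rz_closed (M : ℕ) (hM : 2 ≤ M) (n : ℕ) :
    2 * Rz M n = (M:ℤ) * ((M:ℤ) - 1) * ((n / M : ℕ) : ℤ)
      + ((n % M : ℕ) : ℤ) * (((n % M : ℕ) : ℤ) - 1) := by
  induction n with
  | zero => simp [Rz]
  | succ n ih =>
    have hM0 : 0 < M := by omega
    have hdm : M * (n / M) + n % M = n := Nat.div_add_mod n M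
    have hrlt : n % M < M := Nat.mod_lt _ hM0
    have hsplit : n + 1 = M * (n / M) + (n % M + 1) := by omega
    have hmod : (n+1) % M = (n % M + 1) % M := by
      conv_lhs => rw [hsplit]
      rw [Nat.mul_comm, Nat.add_comm, Nat.add_mul_mod_self_right]
    have hdiv : (n+1) / M = n / M + (n % M + 1) / M := by
      conv_lhs => rw [hsplit]
      rw [Nat.mul_add_div hM0]
    have hR : Rz M (n+1) = Rz M n + ((n % M : ℕ) : ℤ) := by
      rw [Rz, Finset.sum_range_succ]; rfl
    rcases Nat.lt_or_ge (n % M + 1) M with h | h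
    · have h1 : (n+1) % M = n % M + 1 := by rw [hmod, Nat.mod_eq_of_lt h]
      have h2 : (n+1) / M = n / M := by
        rw [hdiv, Nat.div_eq_of_lt h, Nat.add_zero]
      rw [hR, h1, h2]
      simp only [Nat.cast_add, Nat.cast_one]
      linear_combination ih
    · have heq : n % M + 1 = M := by omega
      have h1 : (n+1) % M = 0 := by rw [hmod, heq, Nat.mod_self]
      have h2 : (n+1) / M = n / M + 1 := by rw [hdiv, heq, Nat.div_self hM0]
      have hrz : ((n % M : ℕ) : ℤ) = (M:ℤ) - 1 := by omega
      rw [hR, h1, h2]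
      simp only [Nat.cast_add, Nat.cast_one, Nat.cast_zero]
      linear_combination ih + (((n % M : ℕ):ℤ) + (M:ℤ)) * hrz

lemma AJ_le (M m l : ℕ) (hM : 2 ≤ M) (hlm : l ≤ m) :
    Rz M (m + l) + Rz M (m - l) - 2 * Rz M m
      ≤ ((min (l % M) (M - l % M) : ℕ) : ℤ) ^ 2 := by
  have hM0 : 0 < M := by omega
  have c1 := Rz_closed M hM (m + l)
  have c2 := Rz_closed M hM (m - l)
  have c0 := Rz_closed M hM m
  have d1 := Nat.div_add_mod (m + l) M
  have d2 := Nat.div_add_mod (m - l) M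
  have d0 := Nat.div_add_mod m M
  -- residues
  have hr1 : (m + l) % M < M := Nat.mod_lt _ hM0
  have hr2 : (m - l) % M < M := Nat.mod_lt _ hM0
  have hr0 : m % M < M := Nat.mod_lt _ hM0
  have hb : l % M < M := Nat.mod_lt _ hM0
  have e1 : (m + l) % M = (m % M + l % M) % M := by rw [Nat.add_mod]
  have e0 : m % M = ((m - l) % M + l % M) % M := by
    conv_lhs => rw [show m = (m - l) + l from by omega]
    rw [Nat.add_mod]
  -- the div equation in ℤ : M * X = 2 r0 - r1 - r2
  have hX : (M:ℤ) * (((m+l)/M : ℕ) + ((m-l)/M : ℕ) - 2 * ((m/M : ℕ):ℤ))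
      = 2 * ((m % M : ℕ):ℤ) - ((m+l) % M : ℕ) - ((m-l) % M : ℕ) := by
    have hc : ((m - l : ℕ) : ℤ) = (m : ℤ) - (l : ℤ) := by omega
    have z1 : (M:ℤ) * (((m+l)/M : ℕ):ℤ) + ((m+l)%M : ℕ) = (m:ℤ) + l := by
      exact_mod_cast congrArg (Nat.cast : ℕ → ℤ) d1
    have z2 : (M:ℤ) * (((m-l)/M : ℕ):ℤ) + ((m-l)%M : ℕ) = (m:ℤ) - l := by
      rw [← hc]; exact_mod_cast congrArg (Nat.cast : ℕ → ℤ) d2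
    have z0 : (M:ℤ) * ((m/M : ℕ):ℤ) + (m%M : ℕ) = (m:ℤ) := by
      exact_mod_cast congrArg (Nat.cast : ℕ → ℤ) d0
    linear_combination z1 + z2 - 2 * z0
  -- 2 * A  =  (M-1)(2r0 - r1 - r2) + r1(r1-1)+r2(r2-1)-2r0(r0-1)
  have h2A : 2 * (Rz M (m + l) + Rz M (m - l) - 2 * Rz M m)
      = ((M:ℤ) - 1) * (2 * ((m % M : ℕ):ℤ) - ((m+l) % M : ℕ) - ((m-l) % M : ℕ))
        + ((m+l) % M : ℕ) * (((m+l) % M : ℕ) - 1)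
        + ((m-l) % M : ℕ) * (((m-l) % M : ℕ) - 1)
        - 2 * ((m % M : ℕ):ℤ) * (((m % M : ℕ):ℤ) - 1) := by
    linear_combination c1 + c2 - 2 * c0 + ((M:ℤ) - 1) * hX
  -- case disjunctions
  have E1 : ((m % M + l % M < M) ∧ (m+l) % M = m % M + l % M)
      ∨ ((M ≤ m % M + l % M) ∧ (m+l) % M + M = m % M + l % M) := by
    rcases Nat.lt_or_ge (m % M + l % M) M with h | h
    · exact Or.inl ⟨h, by rw [e1, Nat.mod_eq_of_lt h]⟩
    · refine Or.inr ⟨h, ?_⟩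
      have : (m % M + l % M) % M = m % M + l % M - M := by
        rw [Nat.mod_eq_sub_mod h, Nat.mod_eq_of_lt (by omega)]
      omega
  have E2 : (((m-l) % M + l % M < M) ∧ m % M = (m-l) % M + l % M)
      ∨ ((M ≤ (m-l) % M + l % M) ∧ m % M + M = (m-l) % M + l % M) := by
    rcases Nat.lt_or_ge ((m-l) % M + l % M) M with h | h
    · exact Or.inl ⟨h, by rw [e0, Nat.mod_eq_of_lt h]⟩
    · refine Or.inr ⟨h, ?_⟩
      have : ((m-l) % M + l % M) % M = (m-l) % M + l % M - M := by
        rw [Nat.mod_eq_sub_mod h, Nat.mod_eq_of_lt (by omega)]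
      omega
  -- abbreviations (as casts)
  have hx0 : (0:ℤ) ≤ ((m % M : ℕ):ℤ) := by positivity
  have hmin : ((min (l % M) (M - l % M) : ℕ) : ℤ)
      = min ((l % M : ℕ):ℤ) ((M:ℤ) - ((l % M : ℕ):ℤ)) := by omega
  rw [hmin]
  rcases E1 with ⟨hc1, he1⟩ | ⟨hc1, he1⟩ <;> rcases E2 with ⟨hc2, he2⟩ | ⟨hc2, he2⟩
  · -- r1 = r0+b, r0 = r2+b
    have hz1 : (((m+l) % M : ℕ):ℤ) = ((m%M:ℕ):ℤ) + ((l%M:ℕ):ℤ) := by omega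
    have hz2 : (((m-l) % M : ℕ):ℤ) = ((m%M:ℕ):ℤ) - ((l%M:ℕ):ℤ) := by omega
    rw [hz1, hz2] at h2A
    have hq : 2 * (Rz M (m + l) + Rz M (m - l) - 2 * Rz M m) = 2 * ((l%M:ℕ):ℤ)^2 := by
      linear_combination h2A
    rcases le_total ((l % M : ℕ):ℤ) ((M:ℤ) - ((l % M : ℕ):ℤ)) with hmm | hmm
    · rw [min_eq_left hmm]; linarith
    · rw [min_eq_right hmm]
      have hxb : ((l%M:ℕ):ℤ) ≤ ((m%M:ℕ):ℤ) := by omega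
      have h2 : ((m%M:ℕ):ℤ) + ((l%M:ℕ):ℤ) < M := by omega
      linarith
  · -- r1 = r0+b, r0+M = r2+b  (r2 wraps)
    have hz1 : (((m+l) % M : ℕ):ℤ) = ((m%M:ℕ):ℤ) + ((l%M:ℕ):ℤ) := by omega
    have hz2 : (((m-l) % M : ℕ):ℤ) = ((m%M:ℕ):ℤ) + (M:ℤ) - ((l%M:ℕ):ℤ) := by omega
    rw [hz1, hz2] at h2A
    have hxy : ((m%M:ℕ):ℤ) ≤ ((l%M:ℕ):ℤ) := by omega
    have hcc : ((m%M:ℕ):ℤ) + ((l%M:ℕ):ℤ) < M := by omega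
    rcases le_total ((l % M : ℕ):ℤ) ((M:ℤ) - ((l % M : ℕ):ℤ)) with hmm | hmm
    · rw [min_eq_left hmm]
      have hq : 2 * (Rz M (m + l) + Rz M (m - l) - 2 * Rz M m)
          = 2 * ((l%M:ℕ):ℤ)^2 + 2 * (M:ℤ) * (((m%M:ℕ):ℤ) - ((l%M:ℕ):ℤ)) := by
        linear_combination h2A
      have : (M:ℤ) * (((m%M:ℕ):ℤ) - ((l%M:ℕ):ℤ)) ≤ 0 :=
        mul_nonpos_of_nonneg_of_nonpos (by positivity) (by linarith)
      linarith
    · rw [min_eq_right hmm]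
      have hq : 2 * (Rz M (m + l) + Rz M (m - l) - 2 * Rz M m)
          = 2 * ((M:ℤ) - ((l%M:ℕ):ℤ))^2
            + 2 * (M:ℤ) * (((m%M:ℕ):ℤ) + ((l%M:ℕ):ℤ) - (M:ℤ)) := by
        linear_combination h2A
      have : (M:ℤ) * (((m%M:ℕ):ℤ) + ((l%M:ℕ):ℤ) - (M:ℤ)) ≤ 0 :=
        mul_nonpos_of_nonneg_of_nonpos (by positivity) (by linarith)
      linarith
  · -- r1 wraps, r2 = r0-b
    have hz1 : (((m+l) % M : ℕ):ℤ) = ((m%M:ℕ):ℤ) + ((l%M:ℕ):ℤ) - (M:ℤ) := by omega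
    have hz2 : (((m-l) % M : ℕ):ℤ) = ((m%M:ℕ):ℤ) - ((l%M:ℕ):ℤ) := by omega
    rw [hz1, hz2] at h2A
    have hxb : ((l%M:ℕ):ℤ) ≤ ((m%M:ℕ):ℤ) := by omega
    have hcc : (M:ℤ) ≤ ((m%M:ℕ):ℤ) + ((l%M:ℕ):ℤ) := by omega
    rcases le_total ((l % M : ℕ):ℤ) ((M:ℤ) - ((l % M : ℕ):ℤ)) with hmm | hmm
    · rw [min_eq_left hmm]
      have hq : 2 * (Rz M (m + l) + Rz M (m - l) - 2 * Rz M m)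
          = 2 * ((l%M:ℕ):ℤ)^2
            + 2 * (M:ℤ) * ((M:ℤ) - ((m%M:ℕ):ℤ) - ((l%M:ℕ):ℤ)) := by
        linear_combination h2A
      have : (M:ℤ) * ((M:ℤ) - ((m%M:ℕ):ℤ) - ((l%M:ℕ):ℤ)) ≤ 0 :=
        mul_nonpos_of_nonneg_of_nonpos (by positivity) (by linarith)
      linarith
    · rw [min_eq_right hmm]
      have hq : 2 * (Rz M (m + l) + Rz M (m - l) - 2 * Rz M m)
          = 2 * ((M:ℤ) - ((l%M:ℕ):ℤ))^2
            + 2 * (M:ℤ) * (((l%M:ℕ):ℤ) - ((m%M:ℕ):ℤ)) := by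
        linear_combination h2A
      have : (M:ℤ) * (((l%M:ℕ):ℤ) - ((m%M:ℕ):ℤ)) ≤ 0 :=
        mul_nonpos_of_nonneg_of_nonpos (by positivity) (by linarith)
      linarith
  · -- both wrap
    have hz1 : (((m+l) % M : ℕ):ℤ) = ((m%M:ℕ):ℤ) + ((l%M:ℕ):ℤ) - (M:ℤ) := by omega
    have hz2 : (((m-l) % M : ℕ):ℤ) = ((m%M:ℕ):ℤ) + (M:ℤ) - ((l%M:ℕ):ℤ) := by omega
    rw [hz1, hz2] at h2A
    have hq : 2 * (Rz M (m + l) + Rz M (m - l) - 2 * Rz M m)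
        = 2 * ((M:ℤ) - ((l%M:ℕ):ℤ))^2 := by
      linear_combination h2A
    have hxy : ((m%M:ℕ):ℤ) < ((l%M:ℕ):ℤ) := by omega
    have hcc : (M:ℤ) ≤ ((m%M:ℕ):ℤ) + ((l%M:ℕ):ℤ) := by omega
    rcases le_total ((l % M : ℕ):ℤ) ((M:ℤ) - ((l % M : ℕ):ℤ)) with hmm | hmm
    · rw [min_eq_left hmm]; linarith
    · rw [min_eq_right hmm]; linarith

/-- distance from `l` to the nearest multiple of `2^(J+1)`. -/
def ddf (J l : ℕ) : ℕ := min (l % 2^(J+1)) (2^(J+1) - l % 2^(J+1))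

lemma ddf_zero (J : ℕ) : ddf J 0 = 0 := by simp [ddf]

lemma ddf_one (J : ℕ) : ddf J 1 = 1 := by
  have h2 : 2 ≤ 2^(J+1) := Nat.one_lt_two_pow (by omega)
  have h1 : 1 % 2^(J+1) = 1 := Nat.mod_eq_of_lt (by omega)
  unfold ddf; rw [h1]; omega

lemma ddf_lt (J l : ℕ) : ddf J l ≤ l % 2^(J+1) := min_le_left _ _

lemma ddf0_even (t : ℕ) : ddf 0 (2*t) = 0 := by
  unfold ddf; rw [pow_one, Nat.mul_mod_right]; omega

lemma ddf0_odd (t : ℕ) : ddf 0 (2*t+1) = 1 := by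
  unfold ddf; rw [pow_one]; omega

lemma mod_double (t J : ℕ) : (2*t) % 2^(J+1+1) = 2 * (t % 2^(J+1)) := by
  rw [pow_succ, mul_comm (2^(J+1)) 2, Nat.mul_mod_mul_left]

lemma ddf_succ_even (J t : ℕ) : ddf (J+1) (2*t) = 2 * ddf J t := by
  have h := mod_double t J
  have hr : t % 2^(J+1) < 2^(J+1) := Nat.mod_lt _ (by positivity)
  have hM : (2:ℕ)^(J+1+1) = 2 * 2^(J+1) := by ring
  unfold ddf; omega

lemma mod_double_odd (t J : ℕ) : (2*t+1) % 2^(J+1+1) = 2 * (t % 2^(J+1)) + 1 := by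
  have e := Nat.mod_add_div t (2^(J+1))
  have hsplit : 2*t+1 = (2 * (t % 2^(J+1)) + 1) + 2^(J+1+1) * (t / 2^(J+1)) := by
    conv_lhs => rw [← e]
    ring
  rw [hsplit, Nat.add_mul_mod_self_left]
  exact Nat.mod_eq_of_lt (by
    have : t % 2^(J+1) < 2^(J+1) := Nat.mod_lt _ (by positivity)
    have hM : (2:ℕ)^(J+1+1) = 2 * 2^(J+1) := by ring
    omega)

lemma mod_succ (t M : ℕ) (hM : 2 ≤ M) :
    ((t+1) % M = t % M + 1) ∨ (t % M + 1 = M ∧ (t+1) % M = 0) := by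
  have h : (t+1) % M = (t % M + 1) % M := by
    rw [Nat.add_mod, Nat.mod_eq_of_lt (show 1 < M by omega)]
  have hr : t % M < M := Nat.mod_lt _ (by omega)
  rcases Nat.lt_or_ge (t % M + 1) M with hlt | hge
  · exact Or.inl (by rw [h, Nat.mod_eq_of_lt hlt])
  · have heq : t % M + 1 = M := by omega
    exact Or.inr ⟨heq, by rw [h, heq, Nat.mod_self]⟩

lemma ddf_succ_odd (J t : ℕ) : ddf (J+1) (2*t+1) = ddf J t + ddf J (t+1) := by
  have h1 := mod_double_odd t J
  have h2 : 2 ≤ 2^(J+1) := Nat.one_lt_two_pow (by omega)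
  have h3 := mod_succ t (2^(J+1)) h2
  have hr : t % 2^(J+1) < 2^(J+1) := Nat.mod_lt _ (by omega)
  have hr' : (t+1) % 2^(J+1) < 2^(J+1) := Nat.mod_lt _ (by omega)
  have hM : (2:ℕ)^(J+1+1) = 2 * 2^(J+1) := by ring
  have hMe : (2:ℕ)^(J+1) = 2 * 2^J := by ring
  unfold ddf; omega

lemma ddf_step (J t : ℕ) : ddf J (t+1) = ddf J t + 1 ∨ ddf J t = ddf J (t+1) + 1 := by
  have h2 : 2 ≤ 2^(J+1) := Nat.one_lt_two_pow (by omega)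
  have h3 := mod_succ t (2^(J+1)) h2
  have hr : t % 2^(J+1) < 2^(J+1) := Nat.mod_lt _ (by omega)
  have hMe : (2:ℕ)^(J+1) = 2 * 2^J := by ring
  unfold ddf; omega

lemma ddf_sq (J t : ℕ) :
    (ddf J t + ddf J (t+1))^2 = 4 * (ddf J t * ddf J (t+1)) + 1 := by
  rcases ddf_step J t with h | h
  · rw [h]; ring
  · rw [h]; ring

lemma SE_even (x : ℝ) (t K : ℕ) :
    ∑ J ∈ range (K+1), x^J * ((ddf J (2*t) : ℕ):ℝ)^2
      = 4 * x * ∑ J ∈ range K, x^J * ((ddf J t : ℕ):ℝ)^2 := by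
  rw [Finset.sum_range_succ', ddf0_even, Finset.mul_sum]
  simp only [ddf_succ_even]
  rw [Finset.sum_congr rfl (fun J _ => by push_cast; ring :
    ∀ J ∈ range K, x^(J+1) * ((2 * ddf J t : ℕ):ℝ)^2
      = 4 * x * (x^J * ((ddf J t : ℕ):ℝ)^2))]
  simp

lemma SE_odd (x : ℝ) (t K : ℕ) :
    ∑ J ∈ range (K+1), x^J * ((ddf J (2*t+1) : ℕ):ℝ)^2
      = 1 + x * (∑ J ∈ range K, x^J)
        + 4 * x * ∑ J ∈ range K, x^J * ((ddf J t * ddf J (t+1) : ℕ):ℝ) := by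
  rw [Finset.sum_range_succ', ddf0_odd]
  simp only [ddf_succ_odd]
  have hterm : ∀ J ∈ range K, x^(J+1) * ((ddf J t + ddf J (t+1) : ℕ):ℝ)^2
      = x * x^J + 4 * x * (x^J * ((ddf J t * ddf J (t+1) : ℕ):ℝ)) := by
    intro J _
    have h := ddf_sq J t
    have hc : ((ddf J t + ddf J (t+1) : ℕ):ℝ)^2
        = 4 * ((ddf J t * ddf J (t+1) : ℕ):ℝ) + 1 := by
      exact_mod_cast congrArg (Nat.cast (R := ℝ)) h
    rw [hc]; ring
  rw [Finset.sum_congr rfl hterm, Finset.sum_add_distrib, ← Finset.mul_sum, ← Finset.mul_sum]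
  push_cast
  ring

lemma SG_even (x : ℝ) (u K : ℕ) :
    ∑ J ∈ range (K+1), x^J * ((ddf J (2*u) * ddf J (2*u+1) : ℕ):ℝ)
      = 2*x*(∑ J ∈ range K, x^J * ((ddf J u : ℕ):ℝ)^2)
        + 2*x*(∑ J ∈ range K, x^J * ((ddf J u * ddf J (u+1) : ℕ):ℝ)) := by
  rw [Finset.sum_range_succ', ddf0_even]
  simp only [ddf_succ_even, ddf_succ_odd]
  have hterm : ∀ J ∈ range K, x^(J+1) * ((2 * ddf J u * (ddf J u + ddf J (u+1)) : ℕ):ℝ)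
      = 2 * x * (x^J * ((ddf J u : ℕ):ℝ)^2)
        + 2 * x * (x^J * ((ddf J u * ddf J (u+1) : ℕ):ℝ)) := by
    intro J _; push_cast; ring
  rw [Finset.sum_congr rfl hterm, Finset.sum_add_distrib, ← Finset.mul_sum, ← Finset.mul_sum]
  simp

lemma SG_odd (x : ℝ) (u K : ℕ) :
    ∑ J ∈ range (K+1), x^J * ((ddf J (2*u+1) * ddf J (2*u+1+1) : ℕ):ℝ)
      = 2*x*(∑ J ∈ range K, x^J * ((ddf J u * ddf J (u+1) : ℕ):ℝ))
        + 2*x*(∑ J ∈ range K, x^J * ((ddf J (u+1) : ℕ):ℝ)^2) := by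
  rw [Finset.sum_range_succ']
  have e0 : ddf 0 (2*u+1+1) = 0 := by
    have : 2*u+1+1 = 2*(u+1) := by ring
    rw [this, ddf0_even]
  have es : ∀ J, ddf (J+1) (2*u+1+1) = 2 * ddf J (u+1) := by
    intro J
    have : 2*u+1+1 = 2*(u+1) := by ring
    rw [this, ddf_succ_even]
  rw [e0]
  simp only [ddf_succ_odd, es]
  have hterm : ∀ J ∈ range K, x^(J+1) * (((ddf J u + ddf J (u+1)) * (2 * ddf J (u+1)) : ℕ):ℝ)
      = 2 * x * (x^J * ((ddf J u * ddf J (u+1) : ℕ):ℝ))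
        + 2 * x * (x^J * ((ddf J (u+1) : ℕ):ℝ)^2) := by
    intro J _; push_cast; ring
  rw [Finset.sum_congr rfl hterm, Finset.sum_add_distrib, ← Finset.mul_sum, ← Finset.mul_sum]
  simp

lemma geo_tel (x : ℝ) (K : ℕ) : (1 - x) * ∑ J ∈ range K, x^J = 1 - x^K := by
  linear_combination (-1 : ℝ) * geom_sum_mul x K

variable {p : ℝ}

lemma mid_concave (hp0 : 0 ≤ p) (hp1 : p ≤ 1) {a : ℝ} (ha : 0 ≤ a) :
    a ^ p + (a + 2) ^ p ≤ 2 * (a + 1) ^ p := by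
  have hcc := Real.concaveOn_rpow hp0 hp1
  have h := hcc.2 (Set.mem_Ici.mpr ha) (Set.mem_Ici.mpr (by linarith : (0:ℝ) ≤ a + 2))
    (by norm_num : (0:ℝ) ≤ 1/2) (by norm_num : (0:ℝ) ≤ 1/2) (by norm_num)
  have heq : (1/2 : ℝ) • a + (1/2 : ℝ) • (a + 2) = a + 1 := by
    simp [smul_eq_mul]; ring
  rw [heq] at h
  simp only [smul_eq_mul] at h
  linarith

lemma Rineq (hp0 : 0 ≤ p) (hp1 : p ≤ 1) {x : ℝ} (hx : 0 ≤ x) :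
    (2:ℝ)^p * (x ^ (p+1) + (x + 1) ^ (p+1)) ≤ (2*x + 1) ^ (p+1) + (2:ℝ)^p - 1 := by
  set q : ℝ := (2:ℝ)^p with hq
  have hq0 : 0 < q := Real.rpow_pos_of_pos two_pos p
  set f : ℝ → ℝ := fun y => (2*y+1) ^ (p+1) - q * y ^ (p+1) - q * (y+1) ^ (p+1) with hf
  have hs1 : 1 ≤ p + 1 := by linarith
  -- monotonicity of f on [0, ∞)
  have hmono : MonotoneOn f (Set.Ici (0:ℝ)) := by
    have hderiv : ∀ y : ℝ, 0 < y → HasDerivAt f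
        (2 * (p+1) * (2*y+1)^p - q * ((p+1) * y^p) - q * ((p+1) * (y+1)^p)) y := by
      intro y hy
      have h1 : HasDerivAt (fun y : ℝ => 2*y+1) 2 y := by
        simpa using ((hasDerivAt_id y).const_mul (2:ℝ)).add_const 1
      have h1' : HasDerivAt (fun y : ℝ => (2*y+1) ^ (p+1)) (2 * (p+1) * (2*y+1)^p) y := by
        have := h1.rpow_const (p := p+1) (Or.inl (by linarith : 2*y+1 ≠ 0))
        simpa [add_sub_cancel_right] using this
      have h2 : HasDerivAt (fun y : ℝ => y ^ (p+1)) ((p+1) * y^p) y := by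
        have := Real.hasDerivAt_rpow_const (x := y) (p := p+1) (Or.inl hy.ne')
        simpa [add_sub_cancel_right] using this
      have h3 : HasDerivAt (fun y : ℝ => (y+1) ^ (p+1)) ((p+1) * (y+1)^p) y := by
        have h3a : HasDerivAt (fun y : ℝ => y+1) 1 y := (hasDerivAt_id y).add_const 1
        have := h3a.rpow_const (p := p+1) (Or.inl (by linarith : y+1 ≠ 0))
        simpa [add_sub_cancel_right] using this
      exact (h1'.sub ((h2.const_mul q))).sub (h3.const_mul q)
    apply monotoneOn_of_deriv_nonneg (convex_Ici 0)
    · -- continuity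
      apply ContinuousOn.sub
      apply ContinuousOn.sub
      · exact (Continuous.continuousOn (by continuity)).rpow_const
          (fun y hy => Or.inr (by linarith))
      · exact ContinuousOn.const_smul ((Continuous.continuousOn (by continuity)).rpow_const
          (fun y hy => Or.inr (by linarith))) q
      · exact ContinuousOn.const_smul ((Continuous.continuousOn (by continuity)).rpow_const
          (fun y hy => Or.inr (by linarith))) q
    · intro y hy
      rw [interior_Ici] at hy
      rw [Set.mem_Ioi] at hy
      exact ((hderiv y hy).differentiableAt).differentiableWithinAt
    · intro y hy
      rw [interior_Ici] at hy
      rw [Set.mem_Ioi] at hy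
      rw [(hderiv y hy).deriv]
      have key : (2*y)^p + (2*y+2)^p ≤ 2 * (2*y+1)^p := by
        have := mid_concave hp0 hp1 (le_of_lt (by linarith : (0:ℝ) < 2*y))
        convert this using 2 <;> ring
      have e1 : q * y^p = (2*y)^p := by
        rw [Real.mul_rpow (by norm_num) hy.le]
      have e2 : q * (y+1)^p = (2*y+2)^p := by
        rw [show (2*y+2 : ℝ) = 2*(y+1) by ring, Real.mul_rpow (by norm_num) (by linarith)]
      nlinarith [key, e1, e2, (by linarith : (0:ℝ) < p + 1)]
  -- f 0 = 1 - q
  have hf0 : f 0 = 1 - q := by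
    simp only [hf]
    rw [mul_zero, zero_add, Real.one_rpow, Real.zero_rpow (by linarith : p + 1 ≠ 0)]
    ring
  have := hmono (Set.mem_Ici.mpr le_rfl) (Set.mem_Ici.mpr hx) hx
  rw [hf0] at this
  simp only [hf] at this
  linarith

/-- Statement P1. -/
def P1 (p : ℝ) (l : ℕ) : Prop := ∀ K : ℕ, l ≤ 2^K →
    (1 - (2:ℝ)^p/2) * (∑ J ∈ range K, ((2:ℝ)^p/2)^J * ((ddf J l : ℕ):ℝ)^2)
      + ((2:ℝ)^p/2)^K * (l:ℝ)^2 ≤ (l:ℝ) ^ (p+1)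

/-- Statement P2. -/
def P2 (p : ℝ) (t : ℕ) : Prop := ∀ K : ℕ, t+1 ≤ 2^K →
    (1 - (2:ℝ)^p/2) * (2:ℝ)^p
        * (∑ J ∈ range K, ((2:ℝ)^p/2)^J * ((ddf J t * ddf J (t+1) : ℕ):ℝ))
      + (2:ℝ)^p * ((2:ℝ)^p/2)^K * ((t*(t+1) : ℕ):ℝ)
      ≤ (((2*t+1 : ℕ):ℝ) ^ (p+1) - 1)/2

lemma cast_rpow_double (hp0 : 0 ≤ p) (t : ℕ) :
    ((2*t : ℕ):ℝ) ^ (p+1) = 2 * (2:ℝ)^p * ((t:ℕ):ℝ) ^ (p+1) := by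
  have h1 : ((2*t : ℕ):ℝ) = 2 * (t:ℝ) := by push_cast; ring
  rw [h1, Real.mul_rpow (by norm_num) (Nat.cast_nonneg t)]
  have h2 : (2:ℝ) ^ (p+1) = 2 * (2:ℝ)^p := by
    rw [Real.rpow_add two_pos, Real.rpow_one]; ring
  rw [h2]

lemma P12 (hp0 : 0 ≤ p) (hp1 : p ≤ 1) : ∀ n : ℕ, P1 p n ∧ P2 p n := by
  have hq0 : (0:ℝ) < (2:ℝ)^p := Real.rpow_pos_of_pos two_pos p
  have hq2 : (2:ℝ)^p ≤ 2 := by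
    calc (2:ℝ)^p ≤ (2:ℝ)^(1:ℝ) := Real.rpow_le_rpow_of_exponent_le one_le_two hp1
    _ = 2 := Real.rpow_one 2
  have hx0 : (0:ℝ) ≤ (2:ℝ)^p/2 := by positivity
  have hx1 : (1:ℝ) - (2:ℝ)^p/2 ≥ 0 := by linarith
  intro n
  induction n using Nat.strong_induction_on with
  | _ n ih =>
    have h1 : P1 p n := by
      rcases Nat.eq_zero_or_pos n with hn0 | hnpos
      · subst hn0
        intro K _
        simp only [ddf_zero, Nat.cast_zero]
        rw [Real.zero_rpow (by linarith : p + 1 ≠ 0)]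
        simp
      rcases Nat.even_or_odd n with he | ho
      · -- n = 2t, t ≥ 1
        obtain ⟨t, ht⟩ : ∃ t, n = 2*t := by
          obtain ⟨t, ht⟩ := he; exact ⟨t, by omega⟩
        subst ht
        have ht1 : 1 ≤ t := by omega
        intro K hK
        cases K with
        | zero => simp at hK; omega
        | succ K' =>
          have hpow : (2:ℕ)^(K'+1) = 2 * 2^K' := by ring
          have htK : t ≤ 2^K' := by omega
          have IH1 := (ih t (by omega)).1 K' htK
          rw [SE_even, cast_rpow_double hp0]
          have hc2 : ((2*t : ℕ):ℝ) = 2*(t:ℝ) := by push_cast; ring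
          rw [hc2]
          set S := ∑ J ∈ range K', ((2:ℝ)^p/2)^J * ((ddf J t : ℕ):ℝ)^2 with hS
          have hkey : (1 - (2:ℝ)^p/2) * (4*((2:ℝ)^p/2) * S) + ((2:ℝ)^p/2)^(K'+1) * (2*(t:ℝ))^2
              = 2*(2:ℝ)^p * ((1 - (2:ℝ)^p/2)*S + ((2:ℝ)^p/2)^K' * (t:ℝ)^2) := by ring
          rw [hkey]
          exact mul_le_mul_of_nonneg_left IH1 (by positivity)
      · -- n = 2t+1
        obtain ⟨t, ht⟩ := ho
        subst ht
        intro K hK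
        cases K with
        | zero =>
          have : t = 0 := by simpa using hK
          subst this
          norm_num [Real.one_rpow]
        | succ K' =>
          have hdvd : (2:ℕ) ∣ 2^(K'+1) := dvd_pow_self 2 (Nat.succ_ne_zero K')
          have htK : t + 1 ≤ 2^K' := by
            have hpow : (2:ℕ)^(K'+1) = 2 * 2^K' := by ring
            omega
          have IH2 := (ih t (by omega)).2 K' htK
          rw [SE_odd]
          have hgeo := geo_tel ((2:ℝ)^p/2) K'
          have hc1 : ((2*t+1 : ℕ):ℝ) = 2*(t:ℝ)+1 := by push_cast; ring
          rw [hc1] at IH2 ⊢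
          set S := ∑ J ∈ range K', ((2:ℝ)^p/2)^J * ((ddf J t * ddf J (t+1) : ℕ):ℝ) with hS
          set G := ∑ J ∈ range K', ((2:ℝ)^p/2)^J with hG
          have hkey : (1 - (2:ℝ)^p/2) * (1 + ((2:ℝ)^p/2) * G + 4*((2:ℝ)^p/2) * S)
                + ((2:ℝ)^p/2)^(K'+1) * (2*(t:ℝ)+1)^2
              = 1 + 2 * ((1 - (2:ℝ)^p/2) * (2:ℝ)^p * S
                  + (2:ℝ)^p * ((2:ℝ)^p/2)^K' * (((t*(t+1) : ℕ)):ℝ))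
                + ((2:ℝ)^p/2) * ((1 - (2:ℝ)^p/2) * G - 1 + ((2:ℝ)^p/2)^K') := by
            push_cast
            ring
          rw [hkey, hgeo]
          linarith [IH2]
    refine ⟨h1, ?_⟩
    -- P2 n
    rcases Nat.eq_zero_or_pos n with hn0 | hnpos
    · subst hn0
      intro K _
      simp only [ddf_zero, Nat.cast_zero]
      norm_num [Real.one_rpow]
    rcases Nat.even_or_odd n with he | ho
    · -- n = 2u, u ≥ 1
      obtain ⟨u, hu⟩ : ∃ u, n = 2*u := by
        obtain ⟨u, hu⟩ := he; exact ⟨u, by omega⟩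
      subst hu
      have hu1 : 1 ≤ u := by omega
      intro K hK
      cases K with
      | zero => simp at hK; omega
      | succ K' =>
        have hdvd : (2:ℕ) ∣ 2^(K'+1) := dvd_pow_self 2 (Nat.succ_ne_zero K')
        have hpow : (2:ℕ)^(K'+1) = 2 * 2^K' := by ring
        have huK : u ≤ 2^K' := by omega
        have huK1 : u + 1 ≤ 2^K' := by omega
        have IH1 := (ih u (by omega)).1 K' huK
        have IH2 := (ih u (by omega)).2 K' huK1
        rw [SG_even]
        have hR := Rineq hp0 hp1 (by positivity : (0:ℝ) ≤ 2*(u:ℝ))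
        rw [show (2*(2*(u:ℝ))+1) = 2*(2*u)+1 by ring] at hR
        have h2u : (2*(u:ℝ)) ^ (p+1) = 2 * (2:ℝ)^p * ((u:ℕ):ℝ) ^ (p+1) := by
          have := cast_rpow_double hp0 u
          rw [show ((2*u : ℕ):ℝ) = 2*(u:ℝ) by push_cast; ring] at this
          exact this
        rw [h2u] at hR
        -- casts in goal / IH2
        have hc1 : ((2*(2*u)+1 : ℕ):ℝ) = 2*(2*(u:ℝ))+1 := by push_cast; ring
        have hc2 : ((2*u+1 : ℕ):ℝ) = 2*(u:ℝ)+1 := by push_cast; ring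
        have hc3 : ((2*u*(2*u+1) : ℕ):ℝ) = 2*(u:ℝ)*(2*(u:ℝ)+1) := by push_cast; ring
        have hc4 : ((u*(u+1) : ℕ):ℝ) = (u:ℝ)*((u:ℝ)+1) := by push_cast; ring
        rw [hc3, hc1]
        set S1 := ∑ J ∈ range K', ((2:ℝ)^p/2)^J * ((ddf J u : ℕ):ℝ)^2 with hS1
        set S2 := ∑ J ∈ range K', ((2:ℝ)^p/2)^J * ((ddf J u * ddf J (u+1) : ℕ):ℝ) with hS2
        have hkey : (1 - (2:ℝ)^p/2) * (2:ℝ)^p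
                * (2*((2:ℝ)^p/2) * S1 + 2*((2:ℝ)^p/2) * S2)
              + (2:ℝ)^p * ((2:ℝ)^p/2)^(K'+1) * (2*(u:ℝ)*(2*(u:ℝ)+1))
            = ((2:ℝ)^p)^2 * ((1 - (2:ℝ)^p/2) * S1 + ((2:ℝ)^p/2)^K' * (u:ℝ)^2)
              + (2:ℝ)^p * ((1 - (2:ℝ)^p/2) * (2:ℝ)^p * S2
                  + (2:ℝ)^p * ((2:ℝ)^p/2)^K' * (((u*(u+1) : ℕ)):ℝ)) := by
          push_cast
          ring
        rw [hkey]
        have hA := mul_le_mul_of_nonneg_left IH1 (by positivity : (0:ℝ) ≤ ((2:ℝ)^p)^2)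
        have hB := mul_le_mul_of_nonneg_left IH2 (by positivity : (0:ℝ) ≤ (2:ℝ)^p)
        rw [hc2] at hB
        nlinarith [hA, hB, hR]
    · -- n = 2u+1
      obtain ⟨u, hu⟩ := ho
      subst hu
      intro K hK
      cases K with
      | zero => simp at hK
      | succ K' =>
        have hpow : (2:ℕ)^(K'+1) = 2 * 2^K' := by ring
        have huK1 : u + 1 ≤ 2^K' := by omega
        have IH2 := (ih u (by omega)).2 K' huK1
        have IH1 : P1 p (u+1) := by
          rcases Nat.lt_or_ge (u+1) (2*u+1) with hlt | hge
          · exact (ih (u+1) hlt).1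
          · have : u = 0 := by omega
            subst this
            exact h1
        have IH1' := IH1 K' huK1
        rw [SG_odd]
        have hR := Rineq hp0 hp1 (by positivity : (0:ℝ) ≤ 2*(u:ℝ)+1)
        have h2u : ((2*(u:ℝ)+1)+1) ^ (p+1) = 2 * (2:ℝ)^p * ((u+1:ℕ):ℝ) ^ (p+1) := by
          have := cast_rpow_double hp0 (u+1)
          rw [show ((2*(u+1) : ℕ):ℝ) = (2*(u:ℝ)+1)+1 by push_cast; ring] at this
          exact this
        rw [h2u] at hR
        have hc1 : ((2*(2*u+1)+1 : ℕ):ℝ) = 2*(2*(u:ℝ)+1)+1 := by push_cast; ring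
        have hc2 : ((2*u+1 : ℕ):ℝ) = 2*(u:ℝ)+1 := by push_cast; ring
        have hc3 : (((2*u+1)*(2*u+1+1) : ℕ):ℝ) = (2*(u:ℝ)+1)*((2*(u:ℝ)+1)+1) := by
          push_cast; ring
        have hc4 : ((u*(u+1) : ℕ):ℝ) = (u:ℝ)*((u:ℝ)+1) := by push_cast; ring
        have hc5 : (((u+1) : ℕ):ℝ) = (u:ℝ)+1 := by push_cast; ring
        rw [hc1, hc3]
        set S1 := ∑ J ∈ range K', ((2:ℝ)^p/2)^J * ((ddf J (u+1) : ℕ):ℝ)^2 with hS1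
        set S2 := ∑ J ∈ range K', ((2:ℝ)^p/2)^J * ((ddf J u * ddf J (u+1) : ℕ):ℝ) with hS2
        have hkey : (1 - (2:ℝ)^p/2) * (2:ℝ)^p
                * (2*((2:ℝ)^p/2) * S2 + 2*((2:ℝ)^p/2) * S1)
              + (2:ℝ)^p * ((2:ℝ)^p/2)^(K'+1) * ((2*(u:ℝ)+1)*((2*(u:ℝ)+1)+1))
            = ((2:ℝ)^p)^2 * ((1 - (2:ℝ)^p/2) * S1 + ((2:ℝ)^p/2)^K' * (((u+1:ℕ)):ℝ)^2)
              + (2:ℝ)^p * ((1 - (2:ℝ)^p/2) * (2:ℝ)^p * S2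
                  + (2:ℝ)^p * ((2:ℝ)^p/2)^K' * (((u*(u+1) : ℕ)):ℝ)) := by
          push_cast
          ring
        rw [hkey]
        have hA := mul_le_mul_of_nonneg_left IH1' (by positivity : (0:ℝ) ≤ ((2:ℝ)^p)^2)
        have hB := mul_le_mul_of_nonneg_left IH2 (by positivity : (0:ℝ) ≤ (2:ℝ)^p)
        rw [hc2] at hB
        linarith [hA, hB, hR]

lemma rpow_nat (p : ℝ) (j : ℕ) : (2:ℝ)^(p*(j:ℝ)) = ((2:ℝ)^p)^j := by
  rw [Real.rpow_mul (by norm_num : (0:ℝ) ≤ 2), Real.rpow_natCast]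

lemma sWeight_ext (p : ℝ) (k C : ℕ) (h : k ≤ C) :
    sWeight p k = ∑ j ∈ Finset.range C, (if k.testBit j then ((2:ℝ)^p)^j else 0) := by
  rw [sWeight, Finset.sum_congr rfl (fun j _ => by rw [rpow_nat])]
  apply Finset.sum_subset (Finset.range_subset_range.mpr h)
  intro j hj hnj
  simp only [Finset.mem_range, not_lt] at hnj
  have hk : k < 2^j := lt_of_lt_of_le (Nat.lt_two_pow_self (n := k))
    (Nat.pow_le_pow_right (by norm_num) hnj)
  simp [Nat.testBit_lt_two_pow hk]

lemma sw_key (p : ℝ) : ∀ B k : ℕ, k < 2^B →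
    ∑ j ∈ Finset.range B, (if k.testBit j then ((2:ℝ)^p)^j else 0)
      = (1 - (2:ℝ)^p/2) * ∑ J ∈ Finset.range B, ((2:ℝ)^p/2)^J * ((k % 2^(J+1) : ℕ):ℝ)
        + ((2:ℝ)^p/2)^B * (k:ℝ) := by
  intro B
  induction B with
  | zero =>
    intro k hk
    have : k = 0 := by simpa using hk
    subst this; simp
  | succ B ihB =>
    intro k hk
    have hp2B : (0:ℕ) < 2^B := by positivity
    have hk2B : k % 2^B < 2^B := Nat.mod_lt _ hp2B
    have IH := ihB (k % 2^B) hk2B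
    rw [Finset.sum_range_succ]
    have hbs : ∀ j ∈ Finset.range B, (if k.testBit j then ((2:ℝ)^p)^j else 0)
        = (if (k % 2^B).testBit j then ((2:ℝ)^p)^j else 0) := by
      intro j hj
      simp only [Finset.mem_range] at hj
      rw [Nat.testBit_mod_two_pow]
      simp [hj]
    rw [Finset.sum_congr rfl hbs, IH]
    conv_rhs => rw [Finset.sum_range_succ]
    have hmods : ∀ J ∈ Finset.range B, ((2:ℝ)^p/2)^J * ((k % 2^(J+1) : ℕ):ℝ)
        = ((2:ℝ)^p/2)^J * (((k % 2^B) % 2^(J+1) : ℕ):ℝ) := by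
      intro J hJ
      simp only [Finset.mem_range] at hJ
      rw [Nat.mod_mod_of_dvd k (pow_dvd_pow 2 (by omega : J+1 ≤ B))]
    rw [Finset.sum_congr rfl hmods]
    rw [Nat.mod_eq_of_lt hk]
    have hdb : k / 2^B = 0 ∨ k / 2^B = 1 := by
      have h2 : k / 2^B < 2 := Nat.div_lt_of_lt_mul (by
        have : (2:ℕ)^(B+1) = 2^B * 2 := by ring
        omega)
      generalize k / 2^B = d at h2 ⊢
      omega
    have hbit : k.testBit B = decide (k / 2^B % 2 = 1) := Nat.testBit_eq_decide_div_mod_eq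
    have hmd : k % 2^B + 2^B * (k / 2^B) = k := Nat.mod_add_div k (2^B)
    rcases hdb with h0 | h1
    · have hbt : k.testBit B = false := by rw [hbit, h0]; norm_num
      rw [hbt]
      rw [h0, Nat.mul_zero, Nat.add_zero] at hmd
      rw [hmd]
      simp only [Bool.false_eq_true, if_false]
      ring
    · have hbt : k.testBit B = true := by rw [hbit, h1]; rfl
      rw [hbt]
      rw [h1, Nat.mul_one] at hmd
      have hkk : (k:ℝ) = ((k % 2^B : ℕ):ℝ) + (2:ℝ)^B := by
        conv_lhs => rw [← hmd]
        push_cast; ring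
      rw [hkk]
      simp only [if_true]
      have hpow2 : ((2:ℝ)^p/2)^B * (2:ℝ)^B = ((2:ℝ)^p)^B := by
        rw [div_pow, div_mul_cancel₀]
        positivity
      linear_combination (-1 : ℝ) * hpow2

lemma S_eq (p : ℝ) (B n : ℕ) (hn : n ≤ B) :
    SWeight p n = (1 - (2:ℝ)^p/2)
        * ∑ J ∈ Finset.range B, ((2:ℝ)^p/2)^J * ((Rz (2^(J+1)) n : ℤ):ℝ)
      + ((2:ℝ)^p/2)^B * ∑ k ∈ Finset.range n, (k:ℝ) := by
  have hB : B < 2^B := Nat.lt_two_pow_self (n := B)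
  rw [SWeight]
  have hterm : ∀ k ∈ Finset.range n, sWeight p k
      = (1 - (2:ℝ)^p/2) * ∑ J ∈ Finset.range B, ((2:ℝ)^p/2)^J * ((k % 2^(J+1) : ℕ):ℝ)
        + ((2:ℝ)^p/2)^B * (k:ℝ) := by
    intro k hk
    simp only [Finset.mem_range] at hk
    rw [sWeight_ext p k B (by omega), sw_key p B k (by omega)]
  rw [Finset.sum_congr rfl hterm, Finset.sum_add_distrib, ← Finset.mul_sum, ← Finset.mul_sum]
  congr 1
  · congr 1
    rw [Finset.sum_comm]
    apply Finset.sum_congr rfl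
    intro J _
    rw [Rz, Int.cast_sum, Finset.mul_sum]
    exact Finset.sum_congr rfl (fun x _ => by norm_cast)

theorem SWeight_midpoint_ineq' (p : ℝ) (hp0 : 0 ≤ p) (hp1 : p ≤ 1)
    (m l : ℕ) (hlm : l ≤ m) :
    SWeight p (m + l) + SWeight p (m - l) - 2 * SWeight p m ≤ (l:ℝ) ^ (p + 1) := by
  set B := m + l + 1 with hB
  have hq0 : (0:ℝ) < (2:ℝ)^p := Real.rpow_pos_of_pos two_pos p
  have hq2 : (2:ℝ)^p ≤ 2 := by
    calc (2:ℝ)^p ≤ (2:ℝ)^(1:ℝ) := Real.rpow_le_rpow_of_exponent_le one_le_two hp1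
    _ = 2 := Real.rpow_one 2
  have hx0 : (0:ℝ) ≤ (2:ℝ)^p/2 := by positivity
  have hx1 : (0:ℝ) ≤ 1 - (2:ℝ)^p/2 := by linarith
  rw [S_eq p B (m+l) (by omega), S_eq p B (m-l) (by omega), S_eq p B m (by omega)]
  -- Gauss sums
  have gauss : ∀ n : ℕ, 2 * ∑ k ∈ Finset.range n, (k:ℝ) = (n:ℝ)^2 - n := by
    intro n
    induction n with
    | zero => simp
    | succ n ihn => rw [Finset.sum_range_succ]; push_cast; linear_combination ihn
  have hg : ∑ k ∈ Finset.range (m+l), (k:ℝ) + ∑ k ∈ Finset.range (m-l), (k:ℝ)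
      - 2 * ∑ k ∈ Finset.range m, (k:ℝ) = (l:ℝ)^2 := by
    have g1 := gauss (m+l)
    have g2 := gauss (m-l)
    have g3 := gauss m
    have hc : ((m-l:ℕ):ℝ) = (m:ℝ) - (l:ℝ) := by
      push_cast [hlm]; ring
    rw [hc] at g2
    have hc1 : ((m+l:ℕ):ℝ) = (m:ℝ) + (l:ℝ) := by push_cast; ring
    rw [hc1] at g1
    linear_combination g1/2 + g2/2 - g3
  -- sum combination
  have hcomb : ∀ J ∈ Finset.range B,
      ((2:ℝ)^p/2)^J * ((Rz (2^(J+1)) (m+l) : ℤ):ℝ)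
        + ((2:ℝ)^p/2)^J * ((Rz (2^(J+1)) (m-l) : ℤ):ℝ)
        - 2 * (((2:ℝ)^p/2)^J * ((Rz (2^(J+1)) m : ℤ):ℝ))
      = ((2:ℝ)^p/2)^J
          * ((Rz (2^(J+1)) (m+l) + Rz (2^(J+1)) (m-l) - 2 * Rz (2^(J+1)) m : ℤ):ℝ) := by
    intro J _
    push_cast
    ring
  have hAJ : ∀ J ∈ Finset.range B,
      ((2:ℝ)^p/2)^J * ((Rz (2^(J+1)) (m+l) + Rz (2^(J+1)) (m-l) - 2 * Rz (2^(J+1)) m : ℤ):ℝ)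
        ≤ ((2:ℝ)^p/2)^J * ((ddf J l : ℕ):ℝ)^2 := by
    intro J _
    apply mul_le_mul_of_nonneg_left _ (by positivity)
    have h := AJ_le (2^(J+1)) m l (Nat.one_lt_two_pow (by omega)) hlm
    have h' : ((Rz (2^(J+1)) (m+l) + Rz (2^(J+1)) (m-l) - 2 * Rz (2^(J+1)) m : ℤ):ℝ)
        ≤ (((min (l % 2^(J+1)) (2^(J+1) - l % 2^(J+1)) : ℕ) : ℤ) ^ 2 : ℤ) := by
      exact_mod_cast h
    calc ((Rz (2^(J+1)) (m+l) + Rz (2^(J+1)) (m-l) - 2 * Rz (2^(J+1)) m : ℤ):ℝ)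
        ≤ ((((min (l % 2^(J+1)) (2^(J+1) - l % 2^(J+1)) : ℕ) : ℤ) ^ 2 : ℤ) : ℝ) := h'
      _ = ((ddf J l : ℕ):ℝ)^2 := by rw [ddf]; norm_cast
  -- assemble
  have key : (1 - (2:ℝ)^p/2)
        * ∑ J ∈ Finset.range B, ((2:ℝ)^p/2)^J * ((Rz (2^(J+1)) (m+l) : ℤ):ℝ)
      + ((2:ℝ)^p/2)^B * ∑ k ∈ Finset.range (m+l), (k:ℝ)
      + ((1 - (2:ℝ)^p/2)
        * ∑ J ∈ Finset.range B, ((2:ℝ)^p/2)^J * ((Rz (2^(J+1)) (m-l) : ℤ):ℝ)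
      + ((2:ℝ)^p/2)^B * ∑ k ∈ Finset.range (m-l), (k:ℝ))
      - 2 * ((1 - (2:ℝ)^p/2)
        * ∑ J ∈ Finset.range B, ((2:ℝ)^p/2)^J * ((Rz (2^(J+1)) m : ℤ):ℝ)
      + ((2:ℝ)^p/2)^B * ∑ k ∈ Finset.range m, (k:ℝ))
      = (1 - (2:ℝ)^p/2) * ∑ J ∈ Finset.range B, ((2:ℝ)^p/2)^J
          * ((Rz (2^(J+1)) (m+l) + Rz (2^(J+1)) (m-l) - 2 * Rz (2^(J+1)) m : ℤ):ℝ)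
        + ((2:ℝ)^p/2)^B * (l:ℝ)^2 := by
    rw [← Finset.sum_congr rfl hcomb, Finset.sum_sub_distrib, Finset.sum_add_distrib, ← hg,
      ← Finset.mul_sum]
    ring
  rw [key]
  have hsum_le : ∑ J ∈ Finset.range B, ((2:ℝ)^p/2)^J
        * ((Rz (2^(J+1)) (m+l) + Rz (2^(J+1)) (m-l) - 2 * Rz (2^(J+1)) m : ℤ):ℝ)
      ≤ ∑ J ∈ Finset.range B, ((2:ℝ)^p/2)^J * ((ddf J l : ℕ):ℝ)^2 :=
    Finset.sum_le_sum hAJ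
  have hP1 := (P12 hp0 hp1 l).1 B (by
    have := Nat.lt_two_pow_self (n := B)
    omega)
  calc (1 - (2:ℝ)^p/2) * ∑ J ∈ Finset.range B, ((2:ℝ)^p/2)^J
          * ((Rz (2^(J+1)) (m+l) + Rz (2^(J+1)) (m-l) - 2 * Rz (2^(J+1)) m : ℤ):ℝ)
        + ((2:ℝ)^p/2)^B * (l:ℝ)^2
      ≤ (1 - (2:ℝ)^p/2) * (∑ J ∈ Finset.range B, ((2:ℝ)^p/2)^J * ((ddf J l : ℕ):ℝ)^2)
        + ((2:ℝ)^p/2)^B * (l:ℝ)^2 := by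
        have := mul_le_mul_of_nonneg_left hsum_le hx1
        linarith
    _ ≤ (l:ℝ) ^ (p+1) := hP1

end SWaux

theorem SWeight_midpoint_ineq (p : ℝ) (hp0 : 0 ≤ p) (hp1 : p ≤ 1)
    (m l : ℕ) (hlm : l ≤ m) :
    SWeight p (m + l) + SWeight p (m - l) - 2 * SWeight p m ≤ (l:ℝ) ^ (p + 1) :=
  SWaux.SWeight_midpoint_ineq' p hp0 hp1 m l hlm
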